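/- For the transitive tournament T_n on vertices {0,...,n} (directed edge i → j iff i < j), and any 2 ≤ k < n, the rank of EMH_{k,k}(T_n) satisfies the recursion rank EMH_{k,k}(T_n) = Σ_{i=k-1}^{n-1} rank EMH_{k-1,k-1}(T_i); moreover rank EMH_{k,k}(T_n) equals the number of k-simplices of the standard n-simplex Δ^n, i.e., C(n+1, k+1). -/

import Mathlib

open scoped Classical

/-- Reachability in a directed graph given by its adjacency relation. -/
def dreach {V : Type} (A : V → V → Prop) : V → V → Prop :=
  Relation.ReflTransGen A

/-- Directed distance: minimal length of a directed path from `x` to `y`. -/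
noncomputable def ddist {V : Type} (A : V → V → Prop) (x y : V) : ℕ :=
  sInf {n | ∃ p : Fin (n + 1) → V, p 0 = x ∧ p (Fin.last n) = y ∧
    ∀ i : Fin n, A (p i.castSucc) (p i.succ)}

/-- Length of a tuple of vertices: sum of consecutive directed distances. -/
noncomputable def dlen {V : Type} (A : V → V → Prop) {k : ℕ} (x : Fin (k + 1) → V) : ℕ :=
  ∑ i : Fin k, ddist A (x i.castSucc) (x i.succ)

/-- Generators of the (k,ℓ) eulerian magnitude chain group of a directed graph:
tuples of k+1 pairwise distinct vertices, each reachable from the previous one,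
of total length ℓ. -/
def demcGen {V : Type} (A : V → V → Prop) (k ℓ : ℕ) : Set (Fin (k + 1) → V) :=
  {x | Function.Injective x ∧ (∀ i : Fin k, dreach A (x i.castSucc) (x i.succ)) ∧
    dlen A x = ℓ}

/-- The (k,ℓ) eulerian magnitude chain group of a directed graph. -/
abbrev dEMC {V : Type} (A : V → V → Prop) (k ℓ : ℕ) : Type :=
  demcGen A k ℓ →₀ ℤ

/-- The `i`-th face: delete the `i`-th vertex if the result is again a generator,
and `0` otherwise. -/
noncomputable def demcFace {V : Type} (A : V → V → Prop) (k ℓ : ℕ) (i : Fin (k + 2))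
    (x : demcGen A (k + 1) ℓ) : dEMC A k ℓ :=
  if h : ((x : Fin (k + 2) → V) ∘ i.succAbove) ∈ demcGen A k ℓ then
    Finsupp.single ⟨_, h⟩ 1 else 0

/-- The eulerian magnitude differential: alternating sum of interior-vertex deletions. -/
noncomputable def demcD {V : Type} (A : V → V → Prop) (k ℓ : ℕ) :
    dEMC A (k + 1) ℓ →ₗ[ℤ] dEMC A k ℓ :=
  Finsupp.lift (dEMC A k ℓ) ℤ (demcGen A (k + 1) ℓ) fun x =>
    ∑ i : Fin (k + 2),
      if i = 0 ∨ i = Fin.last (k + 1) then 0 else ((-1 : ℤ) ^ (i : ℕ)) • demcFace A k ℓ i x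

/-- Cycles of the eulerian magnitude chain complex in degree `k`. -/
noncomputable def demcCycles {V : Type} (A : V → V → Prop) (k ℓ : ℕ) :
    Submodule ℤ (dEMC A k ℓ) :=
  match k with
  | 0 => ⊤
  | k + 1 => LinearMap.ker (demcD A k ℓ)

/-- Eulerian magnitude homology of a directed graph in bidegree (k,ℓ). -/
noncomputable abbrev dEMH {V : Type} (A : V → V → Prop) (k ℓ : ℕ) :=
  demcCycles A k ℓ ⧸
    Submodule.comap (demcCycles A k ℓ).subtype (LinearMap.range (demcD A k ℓ))

/-- The transitive tournament `T_n` on vertices `{0, …, n}`: edge `i → j` iff `i < j`. -/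
def transTournament (n : ℕ) : Fin (n + 1) → Fin (n + 1) → Prop := fun i j => i < j


section AuxEMH

open Finset

lemma ddist_eq_one {n : ℕ} {a b : Fin (n + 1)} (hab : a < b) :
    ddist (transTournament n) a b = 1 := by
  have h1 : 1 ∈ {m | ∃ p : Fin (m + 1) → Fin (n + 1), p 0 = a ∧ p (Fin.last m) = b ∧
      ∀ i : Fin m, transTournament n (p i.castSucc) (p i.succ)} := by
    refine ⟨fun i => if i = 0 then a else b, by simp, by simp [Fin.last], ?_⟩
    intro i
    have hi : i = 0 := Subsingleton.elim i 0
    subst hi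
    simpa [transTournament, Fin.succ_zero_eq_one] using hab
  refine le_antisymm (Nat.sInf_le h1) ?_
  rw [Nat.one_le_iff_ne_zero]
  intro h0
  unfold ddist at h0
  rw [Nat.sInf_eq_zero] at h0
  rcases h0 with h0 | h0
  · obtain ⟨p, hp0, hpl, -⟩ := h0
    have : a = b := by rw [← hp0, ← hpl]; rfl
    exact hab.ne this
  · simp [h0] at h1

lemma dreach_iff {n : ℕ} {a b : Fin (n + 1)} :
    dreach (transTournament n) a b ↔ a ≤ b := by
  constructor
  · intro h
    induction h with
    | refl => exact le_refl a
    | tail _ h ih => exact ih.trans (le_of_lt h)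
  · intro h
    rcases eq_or_lt_of_le h with rfl | h
    · exact Relation.ReflTransGen.refl
    · exact Relation.ReflTransGen.single h

lemma mem_demcGen_iff {n m ℓ : ℕ} {x : Fin (m + 1) → Fin (n + 1)} :
    x ∈ demcGen (transTournament n) m ℓ ↔ StrictMono x ∧ ℓ = m := by
  constructor
  · rintro ⟨hinj, hreach, hlen⟩
    have hsm : StrictMono x := by
      rw [Fin.strictMono_iff_lt_succ]
      intro i
      rcases lt_or_eq_of_le (dreach_iff.mp (hreach i)) with h | h
      · exact h
      · exact absurd (hinj h) (Fin.castSucc_lt_succ (i := i)).ne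
    have hl : dlen (transTournament n) x = m := by
      unfold dlen
      rw [Finset.sum_congr rfl fun i _ => ddist_eq_one (hsm (Fin.castSucc_lt_succ (i := i)))]
      simp
    exact ⟨hsm, by rw [← hlen, hl]⟩
  · rintro ⟨hsm, rfl⟩
    refine ⟨hsm.injective, fun i => dreach_iff.mpr (hsm (Fin.castSucc_lt_succ (i := i))).le, ?_⟩
    unfold dlen
    rw [Finset.sum_congr rfl fun i _ => ddist_eq_one (hsm (Fin.castSucc_lt_succ (i := i)))]
    simp

lemma demcGen_isEmpty {n m ℓ : ℕ} (h : ℓ ≠ m) :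
    IsEmpty (demcGen (transTournament n) m ℓ) := by
  rw [Set.isEmpty_coe_sort, Set.eq_empty_iff_forall_notMem]
  intro x hx
  exact h (mem_demcGen_iff.mp hx).2

lemma demcD_eq_zero {n k ℓ : ℕ} (h : ℓ ≠ k) :
    demcD (transTournament n) k ℓ = 0 := by
  apply Finsupp.lhom_ext
  intro a b
  rw [demcD, Finsupp.lift_apply, Finsupp.sum_single_index (by simp)]
  have hz : ∀ i : Fin (k + 2),
      (if i = 0 ∨ i = Fin.last (k + 1) then 0 else
        ((-1 : ℤ) ^ (i : ℕ)) • demcFace (transTournament n) k ℓ i a) = 0 := by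
    intro i
    split
    · rfl
    · have : demcFace (transTournament n) k ℓ i a = 0 := by
        rw [demcFace]
        apply dif_neg
        intro hmem
        exact h (mem_demcGen_iff.mp hmem).2
      rw [this, smul_zero]
  simp only [LinearMap.zero_apply]
  rw [Finset.sum_congr rfl fun i _ => hz i]
  simp

noncomputable def strictMonoEquiv (N k : ℕ) :
    {f : Fin k → Fin N // StrictMono f} ≃ {s : Finset (Fin N) // s.card = k} where
  toFun f := ⟨Finset.univ.image f.1, by
    rw [Finset.card_image_of_injective _ f.2.injective, Finset.card_univ, Fintype.card_fin]⟩
  invFun s := ⟨s.1.orderEmbOfFin s.2, (s.1.orderEmbOfFin s.2).strictMono⟩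
  left_inv f := by
    apply Subtype.ext
    exact (Finset.orderEmbOfFin_unique _
      (fun x => Finset.mem_image_of_mem _ (Finset.mem_univ x)) f.2).symm
  right_inv s := by
    apply Subtype.ext
    apply Finset.coe_injective
    rw [Finset.coe_image, Finset.coe_univ, Set.image_univ]
    exact Finset.range_orderEmbOfFin s.1 s.2

lemma card_strictMono_fin (N k : ℕ) :
    Fintype.card {f : Fin k → Fin N // StrictMono f} = N.choose k := by
  rw [Fintype.card_congr (strictMonoEquiv N k), Fintype.card_finset_len, Fintype.card_fin]

lemma finrank_emh (n k : ℕ) :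
    Module.finrank ℤ (dEMH (transTournament n) (k + 1) (k + 1)) = (n + 1).choose (k + 2) := by
  have hsub : Subsingleton (dEMC (transTournament n) (k + 2) (k + 1)) := by
    haveI := demcGen_isEmpty (n := n) (m := k + 2) (ℓ := k + 1) (by omega)
    exact ⟨fun f g => Finsupp.ext fun a => (IsEmpty.false a).elim⟩
  have hrange : LinearMap.range (demcD (transTournament n) (k + 1) (k + 1)) = ⊥ := by
    rw [LinearMap.range_eq_bot]
    apply LinearMap.ext
    intro v
    haveI := hsub
    rw [Subsingleton.elim v 0]
    simp
  have hN : Submodule.comap (demcCycles (transTournament n) (k + 1) (k + 1)).subtype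
      (LinearMap.range (demcD (transTournament n) (k + 1) (k + 1))) = ⊥ := by
    rw [hrange, Submodule.comap_bot, Submodule.ker_subtype]
  have hC : demcCycles (transTournament n) (k + 1) (k + 1) = ⊤ := by
    show LinearMap.ker (demcD (transTournament n) k (k + 1)) = ⊤
    rw [demcD_eq_zero (by omega), LinearMap.ker_zero]
  have e1 := Submodule.quotEquivOfEqBot _ hN
  have e2 := (LinearEquiv.ofEq _ _ hC).trans
    (Submodule.topEquiv (R := ℤ) (M := dEMC (transTournament n) (k + 1) (k + 1)))
  rw [e1.finrank_eq, e2.finrank_eq]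
  haveI : Fintype (demcGen (transTournament n) (k + 1) (k + 1)) := Fintype.ofFinite _
  rw [Module.finrank_finsupp_self]
  have hset : demcGen (transTournament n) (k + 1) (k + 1)
      = {x : Fin (k + 2) → Fin (n + 1) | StrictMono x} := by
    ext x
    rw [mem_demcGen_iff]
    simp
  rw [Fintype.card_congr ((Equiv.setCongr hset).trans (Equiv.subtypeEquivRight fun x => Iff.rfl))]
  exact card_strictMono_fin (n + 1) (k + 2)

end AuxEMH

/-- for `2 ≤ k < n`, the rank of `EMH_{k,k}(T_n)` satisfies the recursion
`rank EMH_{k,k}(T_n) = Σ_{i=k-1}^{n-1} rank EMH_{k-1,k-1}(T_i)`, and equals the number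
`C(n+1, k+1)` of `k`-simplices of the standard `n`-simplex. -/
theorem emh_transitive_tournament (n k : ℕ) (hk : 2 ≤ k) (hkn : k < n) :
    Module.finrank ℤ (dEMH (transTournament n) k k) =
      ∑ i ∈ Finset.Icc (k - 1) (n - 1),
        Module.finrank ℤ (dEMH (transTournament i) (k - 1) (k - 1)) ∧
    Module.finrank ℤ (dEMH (transTournament n) k k) = (n + 1).choose (k + 1) := by
  obtain ⟨j, rfl⟩ : ∃ j, k = j + 2 := ⟨k - 2, by omega⟩
  have h2 : Module.finrank ℤ (dEMH (transTournament n) (j + 2) (j + 2))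
      = (n + 1).choose (j + 3) := finrank_emh n (j + 1)
  refine ⟨?_, h2⟩
  rw [h2]
  have hsum : ∀ i ∈ Finset.Icc (j + 2 - 1) (n - 1),
      Module.finrank ℤ (dEMH (transTournament i) (j + 2 - 1) (j + 2 - 1))
        = (i + 1).choose (j + 2) := by
    intro i _
    exact finrank_emh i j
  rw [Finset.sum_congr rfl hsum]
  have := Nat.sum_Icc_choose n (j + 2)
  rw [← this]
  have hmap : Finset.Icc (j + 2) n = (Finset.Icc (j + 2 - 1) (n - 1)).image (· + 1) := by
    rw [Finset.image_add_right_Icc]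
    congr 1 <;> omega
  rw [hmap, Finset.sum_image (by intro a _ b _ h; exact Nat.add_right_cancel h)]
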